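/- If G is a group, N a central subgroup of G, and G/N is a perfect group, then the commutator subgroup [G,G] is itself perfect. -/

import Mathlib

open scoped commutatorElement in
lemma commutatorElement_mul_center {G : Type*} [Group G] (a b z w : G)
    (hz : z ∈ Subgroup.center G) (hw : w ∈ Subgroup.center G) :
    ⁅a * z, b * w⁆ = ⁅a, b⁆ := by
  have hz' : ∀ x : G, z * x = x * z := fun x => (Subgroup.mem_center_iff.mp hz x).symm
  have hw' : ∀ x : G, w * x = x * w := fun x => (Subgroup.mem_center_iff.mp hw x).symm
  simp only [commutatorElement_def, mul_inv_rev]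
  calc a * z * (b * w) * (z⁻¹ * a⁻¹) * (w⁻¹ * b⁻¹)
      = a * (z * (b * w) * z⁻¹) * a⁻¹ * w⁻¹ * b⁻¹ := by group
    _ = a * (b * w) * a⁻¹ * w⁻¹ * b⁻¹ := by rw [hz', mul_inv_cancel_right]
    _ = a * b * (w * a⁻¹ * w⁻¹) * b⁻¹ := by group
    _ = a * b * a⁻¹ * b⁻¹ := by rw [hw', mul_inv_cancel_right]

theorem perfect_central_quotient_commutator_perfect
    {G : Type*} [Group G] (N : Subgroup G) [N.Normal]
    (hN : N ≤ Subgroup.center G)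
    (hperf : commutator (G ⧸ N) = ⊤) :
    ⁅commutator G, commutator G⁆ = commutator G := by
  have hsup : commutator G ⊔ N = ⊤ := by
    have hmap : (commutator G).map (QuotientGroup.mk' N) = ⊤ := by
      rw [commutator, Subgroup.map_commutator,
        Subgroup.map_top_of_surjective _ (QuotientGroup.mk'_surjective N)]
      exact hperf
    have h := congrArg (Subgroup.comap (QuotientGroup.mk' N)) hmap
    rwa [Subgroup.comap_map_eq, QuotientGroup.ker_mk', Subgroup.comap_top] at h
  refine le_antisymm (Subgroup.commutator_le_left _ _) ?_
  rw [commutator]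
  rw [Subgroup.commutator_le]
  intro g₁ _ g₂ _
  have hg₁ : g₁ ∈ (↑(commutator G ⊔ N) : Set G) := by rw [hsup]; trivial
  have hg₂ : g₂ ∈ (↑(commutator G ⊔ N) : Set G) := by rw [hsup]; trivial
  rw [Subgroup.mul_normal] at hg₁ hg₂
  obtain ⟨h₁, hh₁, n₁, hn₁, rfl⟩ := hg₁
  obtain ⟨h₂, hh₂, n₂, hn₂, rfl⟩ := hg₂
  rw [commutatorElement_mul_center h₁ h₂ n₁ n₂ (hN hn₁) (hN hn₂)]
  exact Subgroup.commutator_mem_commutator hh₁ hh₂
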